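/- Let μ̄ be a probability distribution on S × A with μ̄(s,a) > 0 for all (s,a), and set D_min := min_{(s,a)} μ̄(s,a). Then for all Q₁, Q₂ : S × A → ℝ one has ‖F̄(Q₁,μ̄) − F̄(Q₂,μ̄)‖∞ ≤ (1 − D_min(1−γ)) ‖Q₁ − Q₂‖∞, and for all Q : S × A → ℝ one has ‖F̄(Q,μ̄)‖∞ ≤ ‖Q‖∞ + 1. -/

import Mathlib

section

variable {S A : Type*} [Fintype S] [Fintype A] [Nonempty S] [Nonempty A]

/-- Sup norm on `S × A → ℝ`. -/
noncomputable def supNorm (Q : S × A → ℝ) : ℝ :=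
  Finset.univ.sup' Finset.univ_nonempty fun y => |Q y|

/-- The Bellman optimality operator. -/
noncomputable def bellmanOpt (p : S × A → S → ℝ) (R : S × A → ℝ) (γ : ℝ)
    (Q : S × A → ℝ) : S × A → ℝ :=
  fun sa => R sa + γ * ∑ s', p sa s' *
    (Finset.univ.sup' Finset.univ_nonempty fun a' => Q (s', a'))

/-- The expected operator `F̄(Q,μ̄)(s,a) = (1 − μ̄(s,a)) Q(s,a) + μ̄(s,a) H(Q)(s,a)`. -/
noncomputable def Fbar (p : S × A → S → ℝ) (R : S × A → ℝ) (γ : ℝ)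
    (μ : S × A → ℝ) (Q : S × A → ℝ) : S × A → ℝ :=
  fun sa => (1 - μ sa) * Q sa + μ sa * bellmanOpt p R γ Q sa

lemma abs_le_supNorm (Q : S × A → ℝ) (sa : S × A) : |Q sa| ≤ supNorm Q :=
  Finset.le_sup' (fun y => |Q y|) (Finset.mem_univ sa)

lemma supNorm_le' {Q : S × A → ℝ} {c : ℝ} (h : ∀ sa, |Q sa| ≤ c) : supNorm Q ≤ c :=
  Finset.sup'_le _ _ fun sa _ => h sa

lemma supNorm_nonneg (Q : S × A → ℝ) : 0 ≤ supNorm Q :=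
  le_trans (abs_nonneg _) (abs_le_supNorm Q (Classical.arbitrary _))

lemma abs_sup'_sub_sup'_le {ι : Type*} (s : Finset ι) (hs : s.Nonempty)
    (f g : ι → ℝ) {c : ℝ} (h : ∀ i ∈ s, |f i - g i| ≤ c) :
    |s.sup' hs f - s.sup' hs g| ≤ c := by
  rw [abs_sub_le_iff]
  constructor
  · rw [sub_le_iff_le_add]
    refine Finset.sup'_le _ _ fun i hi => ?_
    have := (abs_sub_le_iff.mp (h i hi)).1
    have : f i ≤ g i + c := by linarith
    exact this.trans (by linarith [Finset.le_sup' g hi])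
  · rw [sub_le_iff_le_add]
    refine Finset.sup'_le _ _ fun i hi => ?_
    have := (abs_sub_le_iff.mp (h i hi)).2
    have : g i ≤ f i + c := by linarith
    exact this.trans (by linarith [Finset.le_sup' f hi])

lemma abs_sup'_le {ι : Type*} (s : Finset ι) (hs : s.Nonempty)
    (f : ι → ℝ) {c : ℝ} (h : ∀ i ∈ s, |f i| ≤ c) :
    |s.sup' hs f| ≤ c := by
  rw [abs_le]
  obtain ⟨i, hi⟩ := hs
  constructor
  · exact le_trans (neg_le_of_abs_le (h i hi)) (Finset.le_sup' _ hi)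
  · exact Finset.sup'_le _ _ fun i hi => le_of_abs_le (h i hi)

/-- `F̄(·,μ̄)` is a `(1 − D_min(1−γ))`-contraction and satisfies
`‖F̄(Q,μ̄)‖∞ ≤ ‖Q‖∞ + 1`. -/
theorem stmt_1
    (p : S × A → S → ℝ)
    (hp0 : ∀ sa s', 0 ≤ p sa s')
    (hp1 : ∀ sa, ∑ s', p sa s' = 1)
    (R : S × A → ℝ) (hR : ∀ sa, |R sa| ≤ 1)
    (γ : ℝ) (hγ0 : 0 < γ) (hγ1 : γ < 1)
    (μ : S × A → ℝ) (hμ0 : ∀ sa, 0 < μ sa) (hμ1 : ∑ sa, μ sa = 1) :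
    (∀ Q₁ Q₂ : S × A → ℝ,
      supNorm (Fbar p R γ μ Q₁ - Fbar p R γ μ Q₂) ≤
        (1 - (Finset.univ.inf' Finset.univ_nonempty fun y => μ y) * (1 - γ)) *
          supNorm (Q₁ - Q₂)) ∧
    (∀ Q : S × A → ℝ, supNorm (Fbar p R γ μ Q) ≤ supNorm Q + 1) := by
  have hμle1 : ∀ sa, μ sa ≤ 1 := by
    intro sa
    rw [← hμ1]
    exact Finset.single_le_sum (f := μ) (fun i _ => (hμ0 i).le) (Finset.mem_univ sa)
  -- Bellman bound on differences
  have hH : ∀ Q₁ Q₂ : S × A → ℝ, ∀ sa,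
      |bellmanOpt p R γ Q₁ sa - bellmanOpt p R γ Q₂ sa| ≤ γ * supNorm (Q₁ - Q₂) := by
    intro Q₁ Q₂ sa
    have : bellmanOpt p R γ Q₁ sa - bellmanOpt p R γ Q₂ sa =
        γ * ∑ s', p sa s' *
          ((Finset.univ.sup' Finset.univ_nonempty fun a' => Q₁ (s', a')) -
           (Finset.univ.sup' Finset.univ_nonempty fun a' => Q₂ (s', a'))) := by
      simp only [bellmanOpt, Finset.mul_sum]
      ring_nf
      rw [← Finset.sum_sub_distrib]
    rw [this, abs_mul, abs_of_pos hγ0]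
    gcongr
    calc |∑ s', p sa s' * _| ≤ ∑ s', |p sa s' * _| := Finset.abs_sum_le_sum_abs _ _
      _ ≤ ∑ s', p sa s' * supNorm (Q₁ - Q₂) := by
          refine Finset.sum_le_sum fun s' _ => ?_
          rw [abs_mul, abs_of_nonneg (hp0 sa s')]
          gcongr
          · exact hp0 sa s'
          refine abs_sup'_sub_sup'_le _ _ _ _ fun a' _ => ?_
          exact abs_le_supNorm (Q₁ - Q₂) (s', a')
      _ = supNorm (Q₁ - Q₂) := by rw [← Finset.sum_mul, hp1, one_mul]
  constructor
  · intro Q₁ Q₂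
    set Dmin := (Finset.univ.inf' Finset.univ_nonempty fun y => μ y) with hD
    have hDle : ∀ sa, Dmin ≤ μ sa := fun sa => Finset.inf'_le _ (Finset.mem_univ sa)
    have hDpos : 0 < Dmin := by
      obtain ⟨i, _, hi⟩ := Finset.exists_mem_eq_inf' (Finset.univ_nonempty) μ
      rw [hD, hi]; exact hμ0 i
    refine supNorm_le' fun sa => ?_
    have hdiff : (Fbar p R γ μ Q₁ - Fbar p R γ μ Q₂) sa =
        (1 - μ sa) * (Q₁ sa - Q₂ sa) +
          μ sa * (bellmanOpt p R γ Q₁ sa - bellmanOpt p R γ Q₂ sa) := by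
      simp [Fbar]; ring
    rw [hdiff]
    have h1 : |Q₁ sa - Q₂ sa| ≤ supNorm (Q₁ - Q₂) := abs_le_supNorm (Q₁ - Q₂) sa
    have h2 := hH Q₁ Q₂ sa
    have hN := supNorm_nonneg (Q₁ - Q₂)
    calc |(1 - μ sa) * (Q₁ sa - Q₂ sa) + μ sa * _| ≤
          (1 - μ sa) * supNorm (Q₁ - Q₂) + μ sa * (γ * supNorm (Q₁ - Q₂)) := by
          refine (abs_add_le _ _).trans ?_
          rw [abs_mul, abs_mul, abs_of_nonneg (by linarith [hμle1 sa]),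
            abs_of_pos (hμ0 sa)]
          gcongr
          · linarith [hμle1 sa]
          · exact (hμ0 sa).le
      _ = (1 - μ sa * (1 - γ)) * supNorm (Q₁ - Q₂) := by ring
      _ ≤ (1 - Dmin * (1 - γ)) * supNorm (Q₁ - Q₂) := by
          have : Dmin * (1 - γ) ≤ μ sa * (1 - γ) := by
            apply mul_le_mul_of_nonneg_right (hDle sa); linarith
          nlinarith
  · intro Q
    refine supNorm_le' fun sa => ?_
    have hHb : |bellmanOpt p R γ Q sa| ≤ 1 + supNorm Q := by
      simp only [bellmanOpt]
      refine (abs_add_le _ _).trans ?_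
      have hN := supNorm_nonneg Q
      have h2 : |γ * ∑ s', p sa s' *
          (Finset.univ.sup' Finset.univ_nonempty fun a' => Q (s', a'))| ≤ supNorm Q := by
        rw [abs_mul, abs_of_pos hγ0]
        calc γ * |∑ s', p sa s' *
              (Finset.univ.sup' Finset.univ_nonempty fun a' => Q (s', a'))| ≤
            1 * |∑ s', p sa s' *
              (Finset.univ.sup' Finset.univ_nonempty fun a' => Q (s', a'))| :=
              mul_le_mul_of_nonneg_right hγ1.le (abs_nonneg _)
          _ = _ := one_mul _
          _ ≤ ∑ s', p sa s' * supNorm Q := by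
              refine (Finset.abs_sum_le_sum_abs _ _).trans ?_
              refine Finset.sum_le_sum fun s' _ => ?_
              rw [abs_mul, abs_of_nonneg (hp0 sa s')]
              gcongr
              · exact hp0 sa s'
              exact abs_sup'_le _ _ _ fun a' _ => abs_le_supNorm Q (s', a')
          _ = supNorm Q := by rw [← Finset.sum_mul, hp1, one_mul]
      linarith [hR sa]
    have hq := abs_le_supNorm Q sa
    have hN := supNorm_nonneg Q
    simp only [Fbar]
    calc |(1 - μ sa) * Q sa + μ sa * bellmanOpt p R γ Q sa| ≤
          (1 - μ sa) * supNorm Q + μ sa * (1 + supNorm Q) := by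
          refine (abs_add_le _ _).trans ?_
          rw [abs_mul, abs_mul, abs_of_nonneg (by linarith [hμle1 sa]),
            abs_of_pos (hμ0 sa)]
          gcongr
          · linarith [hμle1 sa]
          · exact (hμ0 sa).le
      _ = supNorm Q + μ sa := by ring
      _ ≤ supNorm Q + 1 := by linarith [hμle1 sa]

end
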